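/- For every cycle C of π there exists an integer t ≤ ⌈log₂ n⌉ such that E_{t+1} ∩ C = {m}, where m is the minimum element of C, and E_{t+2} ∩ C = ∅; moreover |E_{r+1} ∩ C| ≤ |E_r ∩ C| / 2 for every r ≥ 1. -/

import Mathlib

attribute [local instance] Classical.propDecidable

variable {n : ℕ}

/-- The first element of `E` encountered strictly after `x` when following `π` along its cycle
(`x` itself if no element of `E` is reachable).  For `E = E_r` this is the map `π_r`. -/
noncomputable def nextIn (π : Equiv.Perm (Fin n)) (E : Finset (Fin n)) (x : Fin n) : Fin n :=
  if h : ∃ k, 0 < k ∧ (⇑π)^[k] x ∈ E then (⇑π)^[Nat.find h] x else x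

/-- `b`-fold iteration of `nextIn`; for `E = E_r` this is `π_r^b`. -/
noncomputable def stepB (π : Equiv.Perm (Fin n)) (b : ℕ) (E : Finset (Fin n)) (x : Fin n) :
    Fin n :=
  (nextIn π E)^[b] x

/-- `level π b r` is the set `E_{r+1}` (0-indexed): `level π b 0 = E_1 = [n]`, and `E_{r+1}`
consists of the elements `i` of `E_r` with `i < π_r^k(i)` for all `k ∈ {−b,…,b} \ {0}`. -/
noncomputable def level (π : Equiv.Perm (Fin n)) (b : ℕ) : ℕ → Finset (Fin n)
  | 0 => Finset.univ
  | r + 1 =>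
    (level π b r).filter fun i =>
      (∀ k ∈ Finset.Icc 1 b, i < (nextIn π (level π b r))^[k] i) ∧
      (∀ k ∈ Finset.Icc 1 b, i < (nextIn π⁻¹ (level π b r))^[k] i)

/-- The cycle of `π` containing `x`, as a finset. -/
def cycleOfF (π : Equiv.Perm (Fin n)) (x : Fin n) : Finset (Fin n) :=
  (Finset.range n).image fun k => (⇑π)^[k] x

private lemma exists_iter_eq_self (σ : Equiv.Perm (Fin n)) (y : Fin n) :
    ∃ L, 0 < L ∧ L ≤ n ∧ (⇑σ)^[L] y = y := by
  obtain ⟨i, j, hne, heq⟩ := Fintype.exists_ne_map_eq_of_card_lt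
    (fun k : Fin (n+1) => (⇑σ)^[(k : ℕ)] y) (by simp)
  have key : ∀ a b : ℕ, a < b → b ≤ n → (⇑σ)^[a] y = (⇑σ)^[b] y →
      ∃ L, 0 < L ∧ L ≤ n ∧ (⇑σ)^[L] y = y := by
    intro a b hab hbn heq'
    refine ⟨b - a, by omega, by omega, ?_⟩
    have h1 : (⇑σ)^[b] y = (⇑σ)^[a] ((⇑σ)^[b - a] y) := by
      rw [← Function.iterate_add_apply]
      congr 1
      omega
    have h2 : (⇑σ)^[a] y = (⇑σ)^[a] ((⇑σ)^[b - a] y) := by rw [← h1, heq']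
    exact ((σ.injective.iterate a) h2).symm
  rcases lt_trichotomy (i : ℕ) (j : ℕ) with h | h | h
  · exact key i j h j.is_le heq
  · exact absurd (Fin.ext h) hne
  · exact key j i h i.is_le heq.symm

private lemma iterate_mod (σ : Equiv.Perm (Fin n)) {y : Fin n} {L : ℕ}
    (hL : (⇑σ)^[L] y = y) (k : ℕ) : (⇑σ)^[k] y = (⇑σ)^[k % L] y := by
  conv_lhs => rw [← Nat.div_add_mod k L, Nat.add_comm, Function.iterate_add_apply,
    Function.iterate_mul, Function.iterate_fixed hL]

private lemma mem_cycleOfF_iff {σ : Equiv.Perm (Fin n)} {x y : Fin n} :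
    y ∈ cycleOfF σ x ↔ ∃ k, (⇑σ)^[k] x = y := by
  constructor
  · intro h
    simp only [cycleOfF, Finset.mem_image, Finset.mem_range] at h
    obtain ⟨k, _, hk⟩ := h
    exact ⟨k, hk⟩
  · rintro ⟨k, rfl⟩
    obtain ⟨L, hL0, hLn, hfix⟩ := exists_iter_eq_self σ x
    simp only [cycleOfF, Finset.mem_image, Finset.mem_range]
    exact ⟨k % L, lt_of_lt_of_le (Nat.mod_lt _ hL0) hLn, (iterate_mod σ hfix k).symm⟩

private lemma iterate_mem_cycleOfF {σ : Equiv.Perm (Fin n)} {x y : Fin n}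
    (hy : y ∈ cycleOfF σ x) (k : ℕ) : (⇑σ)^[k] y ∈ cycleOfF σ x := by
  obtain ⟨j, rfl⟩ := mem_cycleOfF_iff.1 hy
  exact mem_cycleOfF_iff.2 ⟨k + j, by rw [Function.iterate_add_apply]⟩

private lemma cycleOfF_eq_of_mem {σ : Equiv.Perm (Fin n)} {x m : Fin n}
    (hm : m ∈ cycleOfF σ x) : cycleOfF σ x = cycleOfF σ m := by
  obtain ⟨a, ha⟩ := mem_cycleOfF_iff.1 hm
  obtain ⟨L, hL0, hLn, hfix⟩ := exists_iter_eq_self σ x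
  have hx : ∃ b, (⇑σ)^[b] m = x := by
    refine ⟨L * (a + 1) - a, ?_⟩
    rw [← ha, ← Function.iterate_add_apply]
    have hale : a + 1 ≤ L * (a + 1) := Nat.le_mul_of_pos_left _ hL0
    have : L * (a + 1) - a + a = L * (a + 1) := by omega
    rw [this, Function.iterate_mul, Function.iterate_fixed hfix]
  obtain ⟨b, hb⟩ := hx
  ext y
  rw [mem_cycleOfF_iff, mem_cycleOfF_iff]
  constructor
  · rintro ⟨k, rfl⟩
    exact ⟨k + b, by rw [Function.iterate_add_apply, hb]⟩
  · rintro ⟨k, rfl⟩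
    exact ⟨k + a, by rw [Function.iterate_add_apply, ha]⟩

private lemma exists_inv_iterate (σ : Equiv.Perm (Fin n)) {m z : Fin n}
    (hz : ∃ j, (⇑σ)^[j] m = z) : ∃ j, (⇑σ⁻¹)^[j] m = z := by
  obtain ⟨j, rfl⟩ := hz
  obtain ⟨L, hL0, _, hfix⟩ := exists_iter_eq_self σ m
  have hjle : j ≤ L * (j + 1) := by
    have := Nat.le_mul_of_pos_left (j + 1) hL0
    omega
  refine ⟨L * (j + 1) - j, ?_⟩
  have hli : Function.LeftInverse ⇑σ⁻¹ ⇑σ := fun w => σ.symm_apply_apply w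
  have hM : (⇑σ)^[L * (j + 1)] m = m := by
    rw [Function.iterate_mul, Function.iterate_fixed hfix]
  have h1 : m = (⇑σ)^[L * (j + 1) - j] ((⇑σ)^[j] m) := by
    rw [← Function.iterate_add_apply]
    have : L * (j + 1) - j + j = L * (j + 1) := by omega
    rw [this, hM]
  conv_lhs => rw [h1]
  exact (hli.iterate _) _

private lemma cycleOfF_inv {σ : Equiv.Perm (Fin n)} {m : Fin n} :
    cycleOfF σ⁻¹ m = cycleOfF σ m := by
  ext z
  rw [mem_cycleOfF_iff, mem_cycleOfF_iff]
  constructor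
  · intro h
    have := exists_inv_iterate σ⁻¹ h
    rwa [inv_inv] at this
  · exact exists_inv_iterate σ

private lemma nextIn_exists (σ : Equiv.Perm (Fin n)) {E : Finset (Fin n)} {y : Fin n}
    (hy : y ∈ E) : ∃ k, 0 < k ∧ (⇑σ)^[k] y ∈ E := by
  obtain ⟨L, hL0, _, hfix⟩ := exists_iter_eq_self σ y
  exact ⟨L, hL0, by rw [hfix]; exact hy⟩

private lemma nextIn_mem {σ : Equiv.Perm (Fin n)} {E : Finset (Fin n)} {y : Fin n}
    (hy : y ∈ E) : nextIn σ E y ∈ E := by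
  rw [nextIn, dif_pos (nextIn_exists σ hy)]
  exact (Nat.find_spec (nextIn_exists σ hy)).2

private lemma nextIn_mem_cycleOfF {σ : Equiv.Perm (Fin n)} {E : Finset (Fin n)} {x y : Fin n}
    (hy : y ∈ cycleOfF σ x) : nextIn σ E y ∈ cycleOfF σ x := by
  rw [nextIn]
  split
  · exact iterate_mem_cycleOfF hy _
  · exact hy

private lemma nextIn_ne {σ : Equiv.Perm (Fin n)} {E : Finset (Fin n)} {m z : Fin n}
    (hmE : m ∈ E) (hzE : z ∈ E) (hzm : z ≠ m) (hj : ∃ j, (⇑σ)^[j] m = z) :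
    nextIn σ E m ≠ m := by
  obtain ⟨j, hj⟩ := hj
  have hex := nextIn_exists σ hmE
  rw [nextIn, dif_pos hex]
  intro heq
  have h0 : 0 < Nat.find hex := (Nat.find_spec hex).1
  have hmod := iterate_mod σ heq j
  rcases Nat.eq_zero_or_pos (j % Nat.find hex) with hz0 | hz0
  · rw [hz0] at hmod
    simp only [Function.iterate_zero_apply] at hmod
    exact hzm (by rw [← hj, hmod])
  · have hlt : j % Nat.find hex < Nat.find hex := Nat.mod_lt _ h0
    exact Nat.find_min hex hlt ⟨hz0, by rw [← hmod, hj]; exact hzE⟩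

private lemma nextIn_inv_nextIn (σ : Equiv.Perm (Fin n)) {E : Finset (Fin n)} {y : Fin n}
    (hy : y ∈ E) : nextIn σ⁻¹ E (nextIn σ E y) = y := by
  have hex := nextIn_exists σ hy
  set k := Nat.find hex with hk
  have hval : nextIn σ E y = (⇑σ)^[k] y := by rw [nextIn, dif_pos hex]
  have hk0 : 0 < k := (Nat.find_spec hex).1
  have hli : Function.LeftInverse ⇑σ⁻¹ ⇑σ := fun w => σ.symm_apply_apply w
  have hback : ∀ j ≤ k, (⇑σ⁻¹)^[j] ((⇑σ)^[k] y) = (⇑σ)^[k - j] y := by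
    intro j hjk
    have h1 : (⇑σ)^[k] y = (⇑σ)^[j] ((⇑σ)^[k - j] y) := by
      rw [← Function.iterate_add_apply]
      congr 1
      omega
    rw [h1, (hli.iterate j) _]
  have hyk : (⇑σ⁻¹)^[k] ((⇑σ)^[k] y) ∈ E := by
    rw [hback k le_rfl, Nat.sub_self, Function.iterate_zero_apply]
    exact hy
  have hex2 : ∃ k', 0 < k' ∧ (⇑σ⁻¹)^[k'] ((⇑σ)^[k] y) ∈ E := ⟨k, hk0, hyk⟩
  rw [hval, nextIn, dif_pos hex2]
  have hfind : Nat.find hex2 = k := by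
    refine le_antisymm (Nat.find_le ⟨hk0, hyk⟩) ?_
    by_contra hcon
    push_neg at hcon
    obtain ⟨h1, h2⟩ := Nat.find_spec hex2
    rw [hback _ hcon.le] at h2
    exact Nat.find_min hex (show k - Nat.find hex2 < k by omega) ⟨by omega, h2⟩
  rw [hfind, hback k le_rfl, Nat.sub_self, Function.iterate_zero_apply]

private lemma mem_level_succ_iff {π : Equiv.Perm (Fin n)} {r : ℕ} {i : Fin n} :
    i ∈ level π 1 (r + 1) ↔ i ∈ level π 1 r ∧
      i < nextIn π (level π 1 r) i ∧ i < nextIn π⁻¹ (level π 1 r) i := by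
  simp [level, Finset.mem_filter, and_assoc]

private lemma level_zero {π : Equiv.Perm (Fin n)} : level π 1 0 = Finset.univ := rfl

private lemma m_mem_level_succ {π : Equiv.Perm (Fin n)} {x m : Fin n} {r : ℕ}
    (hm : ∀ y ∈ cycleOfF π x, m ≤ y)
    (hmr : m ∈ level π 1 r) (hmC : m ∈ cycleOfF π x)
    {z : Fin n} (hz : z ∈ level π 1 r) (hzC : z ∈ cycleOfF π x) (hzm : z ≠ m) :
    m ∈ level π 1 (r + 1) := by
  have hzm' : z ∈ cycleOfF π m := by rw [← cycleOfF_eq_of_mem hmC]; exact hzC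
  have hjz : ∃ j, (⇑π)^[j] m = z := mem_cycleOfF_iff.1 hzm'
  rw [mem_level_succ_iff]
  refine ⟨hmr, ?_, ?_⟩
  · have hne : nextIn π (level π 1 r) m ≠ m := nextIn_ne hmr hz hzm hjz
    have hmem : nextIn π (level π 1 r) m ∈ cycleOfF π x := nextIn_mem_cycleOfF hmC
    exact lt_of_le_of_ne (hm _ hmem) (Ne.symm hne)
  · have hne : nextIn π⁻¹ (level π 1 r) m ≠ m :=
      nextIn_ne hmr hz hzm (exists_inv_iterate π hjz)
    have hmC' : m ∈ cycleOfF π⁻¹ x := by rw [cycleOfF_inv]; exact hmC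
    have hmem : nextIn π⁻¹ (level π 1 r) m ∈ cycleOfF π x := by
      rw [← cycleOfF_inv (σ := π)]
      exact nextIn_mem_cycleOfF hmC'
    exact lt_of_le_of_ne (hm _ hmem) (Ne.symm hne)

private lemma level_succ_empty_of_singleton {π : Equiv.Perm (Fin n)} {x m : Fin n} {r : ℕ}
    (h : level π 1 r ∩ cycleOfF π x = {m}) :
    level π 1 (r + 1) ∩ cycleOfF π x = ∅ := by
  have hmmem : m ∈ level π 1 r ∩ cycleOfF π x := by rw [h]; exact Finset.mem_singleton_self m
  have hmr : m ∈ level π 1 r := (Finset.mem_inter.1 hmmem).1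
  have hmC : m ∈ cycleOfF π x := (Finset.mem_inter.1 hmmem).2
  have hnm : nextIn π (level π 1 r) m = m := by
    have h1 : nextIn π (level π 1 r) m ∈ level π 1 r := nextIn_mem hmr
    have h2 : nextIn π (level π 1 r) m ∈ cycleOfF π x := nextIn_mem_cycleOfF hmC
    have h3 := Finset.mem_inter.2 ⟨h1, h2⟩
    rw [h, Finset.mem_singleton] at h3
    exact h3
  rw [Finset.eq_empty_iff_forall_notMem]
  intro y hy
  obtain ⟨hy1, hy2⟩ := Finset.mem_inter.1 hy
  have hyr : y ∈ level π 1 r := (mem_level_succ_iff.1 hy1).1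
  have hyeq : y = m := by
    have h3 := Finset.mem_inter.2 ⟨hyr, hy2⟩
    rw [h, Finset.mem_singleton] at h3
    exact h3
  subst hyeq
  have hlt := (mem_level_succ_iff.1 hy1).2.1
  rw [hnm] at hlt
  exact lt_irrefl _ hlt

private lemma halving {π : Equiv.Perm (Fin n)} {x : Fin n} (r : ℕ) :
    2 * ((level π 1 (r + 1)) ∩ cycleOfF π x).card ≤ ((level π 1 r) ∩ cycleOfF π x).card := by
  set E := level π 1 r with hE
  set C := cycleOfF π x with hCdef
  set G := level π 1 (r + 1) ∩ C with hG
  set F := E ∩ C with hF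
  have hGF : G ⊆ F := by
    intro i hi
    obtain ⟨hi1, hi2⟩ := Finset.mem_inter.1 hi
    exact Finset.mem_inter.2 ⟨(mem_level_succ_iff.1 hi1).1, hi2⟩
  have hmaps : ∀ i ∈ G, nextIn π E i ∈ F \ G := by
    intro i hi
    obtain ⟨hi1, hiC⟩ := Finset.mem_inter.1 hi
    have hir : i ∈ E := (mem_level_succ_iff.1 hi1).1
    have hlt : i < nextIn π E i := (mem_level_succ_iff.1 hi1).2.1
    have hmemE : nextIn π E i ∈ E := nextIn_mem hir
    have hmemC : nextIn π E i ∈ C := nextIn_mem_cycleOfF hiC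
    refine Finset.mem_sdiff.2 ⟨Finset.mem_inter.2 ⟨hmemE, hmemC⟩, ?_⟩
    intro hcon
    have h2 := (mem_level_succ_iff.1 (Finset.mem_inter.1 hcon).1).2.2
    rw [nextIn_inv_nextIn π hir] at h2
    exact absurd h2 (not_lt.2 hlt.le)
  have hinj : Set.InjOn (nextIn π E) G := by
    intro a ha b hb hab
    have haE : a ∈ E := (mem_level_succ_iff.1 (Finset.mem_inter.1 ha).1).1
    have hbE : b ∈ E := (mem_level_succ_iff.1 (Finset.mem_inter.1 hb).1).1
    have h := congrArg (nextIn π⁻¹ E) hab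
    rwa [nextIn_inv_nextIn π haE, nextIn_inv_nextIn π hbE] at h
  have hcard : G.card ≤ (F \ G).card := Finset.card_le_card_of_injOn _ hmaps hinj
  have h1 : (F \ G).card = F.card - G.card := Finset.card_sdiff_of_subset hGF
  have h2 : G.card ≤ F.card := Finset.card_le_card hGF
  omega

private lemma m_mem_or_empty {π : Equiv.Perm (Fin n)} {x m : Fin n}
    (hmC : m ∈ cycleOfF π x) (hm : ∀ y ∈ cycleOfF π x, m ≤ y) :
    ∀ r, m ∈ level π 1 r ∩ cycleOfF π x ∨ level π 1 r ∩ cycleOfF π x = ∅ := by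
  intro r
  induction r with
  | zero =>
    left
    exact Finset.mem_inter.2 ⟨Finset.mem_univ m, hmC⟩
  | succ r ih =>
    rcases ih with hmem | hemp
    · by_cases hz : ∃ z ∈ level π 1 r ∩ cycleOfF π x, z ≠ m
      · obtain ⟨z, hz, hzm⟩ := hz
        left
        obtain ⟨hm1, _⟩ := Finset.mem_inter.1 hmem
        obtain ⟨hz1, hz2⟩ := Finset.mem_inter.1 hz
        exact Finset.mem_inter.2 ⟨m_mem_level_succ hm hm1 hmC hz1 hz2 hzm, hmC⟩
      · right
        push_neg at hz
        have hsingle : level π 1 r ∩ cycleOfF π x = {m} :=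
          Finset.eq_singleton_iff_unique_mem.2 ⟨hmem, fun y hy => hz y hy⟩
        exact level_succ_empty_of_singleton hsingle
    · right
      rw [Finset.eq_empty_iff_forall_notMem] at hemp ⊢
      intro y hy
      obtain ⟨hy1, hy2⟩ := Finset.mem_inter.1 hy
      exact hemp y (Finset.mem_inter.2 ⟨(mem_level_succ_iff.1 hy1).1, hy2⟩)


/-- (Fich et al., `b = 1`: `E_{r+1} = {i ∈ E_r : π_r^{−1}(i) > i < π_r(i)}`,
here `E_r = level π 1 (r-1)`, 0-indexed.)  For every cycle `C` of `π` there exists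
`t ≤ ⌈log₂ n⌉` such that `E_{t+1} ∩ C = {m}`, where `m` is the minimum element of `C`, and
`E_{t+2} ∩ C = ∅`; moreover `|E_{r+1} ∩ C| ≤ |E_r ∩ C| / 2` for every `r ≥ 1`. -/
theorem levels_halve_and_reach_min (n : ℕ) (π : Equiv.Perm (Fin n)) (x : Fin n)
    (C : Finset (Fin n)) (hC : C = cycleOfF π x)
    (m : Fin n) (hmC : m ∈ C) (hm : ∀ y ∈ C, m ≤ y) :
    (∃ t ≤ Nat.clog 2 n,
      (level π 1 t) ∩ C = {m} ∧ (level π 1 (t + 1)) ∩ C = ∅) ∧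
    ∀ r : ℕ, 2 * ((level π 1 (r + 1)) ∩ C).card ≤ ((level π 1 r) ∩ C).card := by
  subst hC
  have hn : 0 < n := x.pos
  refine ⟨?_, fun r => halving r⟩
  have hgeom : ∀ r, 2 ^ r * ((level π 1 r) ∩ cycleOfF π x).card ≤
      ((level π 1 0) ∩ cycleOfF π x).card := by
    intro r
    induction r with
    | zero => simp
    | succ r ih =>
      calc 2 ^ (r + 1) * ((level π 1 (r + 1)) ∩ cycleOfF π x).card
          = 2 ^ r * (2 * ((level π 1 (r + 1)) ∩ cycleOfF π x).card) := by ring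
        _ ≤ 2 ^ r * ((level π 1 r) ∩ cycleOfF π x).card :=
            Nat.mul_le_mul_left _ (halving r)
        _ ≤ _ := ih
  have hC0 : ((level π 1 0) ∩ cycleOfF π x).card ≤ n := by
    calc ((level π 1 0) ∩ cycleOfF π x).card ≤ (Finset.univ : Finset (Fin n)).card :=
        Finset.card_le_univ _
      _ = n := by simp
  have hexist : ∃ r, ((level π 1 r) ∩ cycleOfF π x).card ≤ 1 := by
    refine ⟨n, ?_⟩
    by_contra h
    push_neg at h
    have hg := hgeom n
    have h2n : n < 2 ^ n := Nat.lt_two_pow_self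
    nlinarith
  set t := Nat.find hexist with ht
  have htspec : ((level π 1 t) ∩ cycleOfF π x).card ≤ 1 := Nat.find_spec hexist
  have hmin : ∀ s < t, 2 ≤ ((level π 1 s) ∩ cycleOfF π x).card := by
    intro s hs
    have := Nat.find_min hexist hs
    omega
  have hmm : m ∈ level π 1 t ∩ cycleOfF π x := by
    rcases m_mem_or_empty hmC hm t with h | h
    · exact h
    · exfalso
      rcases Nat.eq_zero_or_pos t with h0 | h0
      · rw [h0] at h
        have hmem0 : m ∈ level π 1 0 ∩ cycleOfF π x :=
          Finset.mem_inter.2 ⟨Finset.mem_univ m, hmC⟩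
        rw [h] at hmem0
        exact absurd hmem0 (Finset.notMem_empty m)
      · have hs := hmin (t - 1) (by omega)
        rcases m_mem_or_empty hmC hm (t - 1) with hm1 | he1
        · obtain ⟨z, hz, hzm⟩ := Finset.exists_mem_ne (s := level π 1 (t - 1) ∩ cycleOfF π x) (by omega) m
          obtain ⟨hm1a, _⟩ := Finset.mem_inter.1 hm1
          obtain ⟨hza, hzb⟩ := Finset.mem_inter.1 hz
          have hup : m ∈ level π 1 ((t - 1) + 1) :=
            m_mem_level_succ hm hm1a hmC hza hzb hzm
          have ht1 : t - 1 + 1 = t := by omega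
          rw [ht1] at hup
          rw [Finset.eq_empty_iff_forall_notMem] at h
          exact h m (Finset.mem_inter.2 ⟨hup, hmC⟩)
        · rw [he1] at hs
          simp at hs
  have hsing : level π 1 t ∩ cycleOfF π x = {m} := by
    refine Finset.eq_singleton_iff_unique_mem.2 ⟨hmm, fun y hy => ?_⟩
    exact Finset.card_le_one.1 htspec y hy m hmm
  refine ⟨t, ?_, hsing, level_succ_empty_of_singleton hsing⟩
  rcases Nat.eq_zero_or_pos t with h0 | h0
  · simp [h0]
  · have hs := hmin (t - 1) (by omega)
    have hg := hgeom (t - 1)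
    have h2t : 2 ^ t ≤ n := by
      have hmul : 2 ^ (t - 1) * 2 ≤ 2 ^ (t - 1) * ((level π 1 (t - 1)) ∩ cycleOfF π x).card :=
        Nat.mul_le_mul_left _ hs
      have hpow : 2 ^ t = 2 ^ (t - 1) * 2 := by
        rw [← pow_succ]
        congr 1
        omega
      calc 2 ^ t = 2 ^ (t - 1) * 2 := hpow
        _ ≤ 2 ^ (t - 1) * ((level π 1 (t - 1)) ∩ cycleOfF π x).card := hmul
        _ ≤ ((level π 1 0) ∩ cycleOfF π x).card := hg
        _ ≤ n := hC0
    have hlog : t ≤ Nat.log 2 n := (Nat.le_log_iff_pow_le one_lt_two (by omega)).2 h2t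
    exact le_trans hlog (Nat.log_le_clog 2 n)
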